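/- arXiv:2011.06377 — 8 statements merged into one kernel-verified Lean document; each statement's English description precedes it below -/
import Mathlib

section
/- The set of restrictions to F' of polynomials with integer coefficients is dense in the space of continuous real-valued functions on F' with the supremum norm. -/
open Polynomial Finset

lemma const_approx {δ : ℝ} (hδ : 0 < δ) (hδ2 : δ ≤ 1/2) (c ε : ℝ) (hε : 0 < ε) :
    ∃ p : Polynomial ℤ, ∀ t : ℝ, δ ≤ t → t ≤ 1 - δ →
      |c - Polynomial.aeval t p| ≤ ε := by
  have hr0 : (0:ℝ) ≤ 1 - δ := by linarith
  have hr1 : (1:ℝ) - δ < 1 := by linarith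
  -- choose n with (n+1)*(1-δ)^n ≤ ε
  obtain ⟨n, hn⟩ : ∃ n : ℕ, ((n:ℝ)+1) * (1-δ)^n ≤ ε := by
    have h1 := tendsto_pow_const_mul_const_pow_of_lt_one 1 hr0 hr1
    have h2 := tendsto_pow_atTop_nhds_zero_of_lt_one hr0 hr1
    have h3 : Filter.Tendsto (fun n : ℕ => ((n:ℝ)+1) * (1-δ)^n) Filter.atTop (nhds 0) := by
      have := h1.add h2
      simp only [pow_one, add_zero] at this
      convert this using 2 with n
      ring
    obtain ⟨n, hn⟩ := (h3.eventually_le_const hε).exists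
    exact ⟨n, hn⟩
  refine ⟨∑ k ∈ Finset.range (n+1), Polynomial.C ⌊c * (n.choose k : ℝ)⌋ *
      Polynomial.X ^ k * (1 - Polynomial.X) ^ (n - k), fun t ht1 ht2 => ?_⟩
  have ht0 : (0:ℝ) ≤ t := le_trans hδ.le ht1
  have h1t : 1 - t ≤ 1 - δ := by linarith
  have h1t0 : (0:ℝ) ≤ 1 - t := by linarith
  have heval : Polynomial.aeval t (∑ k ∈ Finset.range (n+1), Polynomial.C ⌊c * (n.choose k : ℝ)⌋ *
      Polynomial.X ^ k * (1 - Polynomial.X) ^ (n - k))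
      = ∑ k ∈ Finset.range (n+1), (⌊c * (n.choose k : ℝ)⌋ : ℝ) * t ^ k * (1 - t) ^ (n - k) := by
    simp [map_sum]
  rw [heval]
  have hbinom : (1:ℝ) = ∑ k ∈ Finset.range (n+1), (n.choose k : ℝ) * t ^ k * (1 - t) ^ (n - k) := by
    have h := (add_pow t (1-t) n)
    simp only [add_sub_cancel, one_pow] at h
    calc (1:ℝ) = ∑ m ∈ Finset.range (n+1), t^m*(1-t)^(n-m)*(n.choose m) := h
    _ = _ := Finset.sum_congr rfl (fun k _ => by ring)
  have hc : c = ∑ k ∈ Finset.range (n+1), (c * (n.choose k : ℝ)) * t ^ k * (1 - t) ^ (n - k) := by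
    conv_lhs => rw [← mul_one c, hbinom]
    rw [Finset.mul_sum]
    exact Finset.sum_congr rfl (fun k _ => by ring)
  have hdiff : c - ∑ k ∈ Finset.range (n+1), (⌊c * (n.choose k : ℝ)⌋ : ℝ) * t ^ k * (1 - t) ^ (n - k)
      = ∑ k ∈ Finset.range (n+1), (c * (n.choose k : ℝ) * t ^ k * (1 - t) ^ (n - k)
        - (⌊c * (n.choose k : ℝ)⌋ : ℝ) * t ^ k * (1 - t) ^ (n - k)) := by
    rw [Finset.sum_sub_distrib, ← hc]
  rw [hdiff]
  have key : ∀ k ∈ Finset.range (n+1),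
      |c * (n.choose k : ℝ) * t ^ k * (1 - t) ^ (n - k)
        - (⌊c * (n.choose k : ℝ)⌋ : ℝ) * t ^ k * (1 - t) ^ (n - k)| ≤ (1-δ)^n := by
    intro k hk
    rw [Finset.mem_range] at hk
    have hfrac0 : (0:ℝ) ≤ c * (n.choose k : ℝ) - ⌊c * (n.choose k : ℝ)⌋ := by
      linarith [Int.floor_le (c * (n.choose k : ℝ))]
    have hfrac1 : c * (n.choose k : ℝ) - ⌊c * (n.choose k : ℝ)⌋ ≤ 1 := by
      linarith [Int.lt_floor_add_one (c * (n.choose k : ℝ))]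
    have hpow : t ^ k * (1 - t) ^ (n - k) ≤ (1-δ)^n := by
      calc t ^ k * (1 - t) ^ (n - k) ≤ (1-δ)^k * (1-δ)^(n-k) := by
            apply mul_le_mul (pow_le_pow_left₀ ht0 ht2 k) (pow_le_pow_left₀ h1t0 h1t (n-k))
              (pow_nonneg h1t0 _) (pow_nonneg (by linarith) _)
        _ = (1-δ)^n := by rw [← pow_add]; congr 1; omega
    have hpow0 : (0:ℝ) ≤ t ^ k * (1 - t) ^ (n - k) :=
      mul_nonneg (pow_nonneg ht0 _) (pow_nonneg h1t0 _)
    have : c * (n.choose k : ℝ) * t ^ k * (1 - t) ^ (n - k)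
        - (⌊c * (n.choose k : ℝ)⌋ : ℝ) * t ^ k * (1 - t) ^ (n - k)
        = (c * (n.choose k : ℝ) - ⌊c * (n.choose k : ℝ)⌋) * (t ^ k * (1 - t) ^ (n - k)) := by ring
    rw [this, abs_of_nonneg (mul_nonneg hfrac0 hpow0)]
    calc (c * (n.choose k : ℝ) - ⌊c * (n.choose k : ℝ)⌋) * (t ^ k * (1 - t) ^ (n - k))
        ≤ 1 * (1-δ)^n := mul_le_mul hfrac1 hpow hpow0 one_pos.le
      _ = (1-δ)^n := one_mul _
  calc |∑ k ∈ Finset.range (n+1), (c * (n.choose k : ℝ) * t ^ k * (1 - t) ^ (n - k)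
        - (⌊c * (n.choose k : ℝ)⌋ : ℝ) * t ^ k * (1 - t) ^ (n - k))|
      ≤ ∑ k ∈ Finset.range (n+1), |c * (n.choose k : ℝ) * t ^ k * (1 - t) ^ (n - k)
        - (⌊c * (n.choose k : ℝ)⌋ : ℝ) * t ^ k * (1 - t) ^ (n - k)| := Finset.abs_sum_le_sum_abs _ _
    _ ≤ ∑ k ∈ Finset.range (n+1), (1-δ)^n := Finset.sum_le_sum key
    _ = ((n:ℝ)+1) * (1-δ)^n := by rw [Finset.sum_const, Finset.card_range]; ring
    _ ≤ ε := hn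

/-- For a nonempty closed subset `F'` of `[0,1]` containing neither `0` nor `1`,
the restrictions to `F'` of integer-coefficient polynomials are dense in `C_ℝ(F')`
for the supremum norm. -/
theorem stmt0 (F' : Set ℝ) (hne : F'.Nonempty) (hclosed : IsClosed F')
    (hsub : F' ⊆ Set.Icc 0 1) (h0 : (0:ℝ) ∉ F') (h1 : (1:ℝ) ∉ F') :
    ∀ g : C(F', ℝ), ∀ ε : ℝ, 0 < ε →
      ∃ p : Polynomial ℤ, ∀ t : F', |g t - Polynomial.aeval (t : ℝ) p| < ε := by
  intro g ε hε
  -- F' is compact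
  have hcomp : IsCompact F' := isCompact_Icc.of_isClosed_subset hclosed hsub
  haveI : CompactSpace F' := isCompact_iff_compactSpace.mp hcomp
  haveI : Nonempty F' := hne.to_subtype
  -- find δ
  obtain ⟨t0, ht0F, ht0min⟩ := hcomp.exists_isMinOn hne
    (Continuous.continuousOn (by continuity : Continuous (fun t : ℝ => min t (1 - t))))
  have ht0mem := hsub ht0F
  have ht0pos : 0 < t0 := lt_of_le_of_ne ht0mem.1 (fun h => h0 (h ▸ ht0F))
  have ht0lt : t0 < 1 := lt_of_le_of_ne ht0mem.2 (fun h => h1 (h ▸ ht0F))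
  set δ : ℝ := min (min t0 (1 - t0)) (1/2) with hδdef
  have hδpos : 0 < δ := lt_min (lt_min ht0pos (by linarith)) (by norm_num)
  have hδhalf : δ ≤ 1/2 := min_le_right _ _
  have hδbound : ∀ t ∈ F', δ ≤ t ∧ t ≤ 1 - δ := by
    intro t htF
    have hmin : min t0 (1 - t0) ≤ min t (1 - t) := ht0min htF
    constructor
    · exact le_trans (min_le_left _ _) (le_trans hmin (min_le_left _ _))
    · have : min t0 (1 - t0) ≤ 1 - t := le_trans hmin (min_le_right _ _)
      have h2 : δ ≤ 1 - t := le_trans (min_le_left _ _) this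
      linarith
  -- real polynomial approximation
  have hdense := polynomialFunctions.topologicalClosure F'
  have hg : g ∈ (polynomialFunctions F').topologicalClosure := hdense ▸ Algebra.mem_top
  have hg' : g ∈ closure (polynomialFunctions F' : Set C(F', ℝ)) :=
    hg
  rw [Metric.mem_closure_iff] at hg'
  obtain ⟨b, hbmem, hbdist⟩ := hg' (ε/2) (by linarith)
  rw [SetLike.mem_coe, ← SetLike.mem_coe, polynomialFunctions_coe] at hbmem
  obtain ⟨P, rfl⟩ := hbmem
  have hPapprox : ∀ t : F', |g t - P.eval (t : ℝ)| < ε/2 := by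
    intro t
    have := ContinuousMap.dist_apply_le_dist (f := g) (g := P.toContinuousMapOnAlgHom F') t
    rw [Real.dist_eq] at this
    calc |g t - P.eval (t:ℝ)| = dist (g t) ((P.toContinuousMapOnAlgHom F') t) := by
          rw [Real.dist_eq]; congr 1
      _ ≤ dist g (P.toContinuousMapOnAlgHom F') := ContinuousMap.dist_apply_le_dist t
      _ < ε/2 := hbdist
  -- approximate each coefficient
  set d : ℕ := P.natDegree
  have hεd : 0 < ε / (2 * (d + 1)) := by positivity
  have hq : ∀ j : ℕ, ∃ q : Polynomial ℤ, ∀ t : ℝ, δ ≤ t → t ≤ 1 - δ →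
      |P.coeff j - Polynomial.aeval t q| ≤ ε / (2 * (d + 1)) :=
    fun j => const_approx hδpos hδhalf (P.coeff j) _ hεd
  choose q hq using hq
  refine ⟨∑ j ∈ Finset.range (d + 1), q j * Polynomial.X ^ j, fun t => ?_⟩
  obtain ⟨htδ1, htδ2⟩ := hδbound t t.2
  have ht01 := hsub t.2
  have heval : Polynomial.aeval (t : ℝ) (∑ j ∈ Finset.range (d + 1), q j * Polynomial.X ^ j)
      = ∑ j ∈ Finset.range (d + 1), Polynomial.aeval (t : ℝ) (q j) * (t : ℝ) ^ j := by
    simp [map_sum]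
  have hPeval : P.eval (t : ℝ) = ∑ j ∈ Finset.range (d + 1), P.coeff j * (t : ℝ) ^ j :=
    Polynomial.eval_eq_sum_range' (Nat.lt_succ_self d) _
  have hsum : |P.eval (t : ℝ) - Polynomial.aeval (t : ℝ)
      (∑ j ∈ Finset.range (d + 1), q j * Polynomial.X ^ j)| ≤ ε / 2 := by
    rw [heval, hPeval, ← Finset.sum_sub_distrib]
    calc |∑ j ∈ Finset.range (d + 1), (P.coeff j * (t:ℝ)^j - Polynomial.aeval (t:ℝ) (q j) * (t:ℝ)^j)|
        ≤ ∑ j ∈ Finset.range (d + 1), |P.coeff j * (t:ℝ)^j - Polynomial.aeval (t:ℝ) (q j) * (t:ℝ)^j| :=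
          Finset.abs_sum_le_sum_abs _ _
      _ ≤ ∑ j ∈ Finset.range (d + 1), ε / (2 * (d + 1)) := by
          apply Finset.sum_le_sum
          intro j _
          have h1 : P.coeff j * (t:ℝ)^j - Polynomial.aeval (t:ℝ) (q j) * (t:ℝ)^j
              = (P.coeff j - Polynomial.aeval (t:ℝ) (q j)) * (t:ℝ)^j := by ring
          rw [h1, abs_mul]
          have hpow : |(t:ℝ)^j| ≤ 1 := by
            rw [abs_of_nonneg (pow_nonneg ht01.1 _)]
            exact pow_le_one₀ ht01.1 ht01.2
          calc |P.coeff j - Polynomial.aeval (t:ℝ) (q j)| * |(t:ℝ)^j|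
              ≤ (ε / (2 * (d + 1))) * 1 :=
                mul_le_mul (hq j _ htδ1 htδ2) hpow (abs_nonneg _) hεd.le
            _ = ε / (2 * (d + 1)) := mul_one _
      _ = (d + 1) * (ε / (2 * (d + 1))) := by
          rw [Finset.sum_const, Finset.card_range]; ring
      _ = ε / 2 := by field_simp
  calc |g t - Polynomial.aeval (t : ℝ) (∑ j ∈ Finset.range (d + 1), q j * Polynomial.X ^ j)|
      ≤ |g t - P.eval (t : ℝ)| + |P.eval (t : ℝ) - Polynomial.aeval (t : ℝ)
        (∑ j ∈ Finset.range (d + 1), q j * Polynomial.X ^ j)| := abs_sub_le _ _ _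
    _ < ε/2 + ε/2 := by
        apply add_lt_add_of_lt_of_le (hPapprox t) hsum
    _ = ε := by ring
end

section
/- If 1/2 is not in F', then the set of functions on F' of the form t ↦ ((2t-1)/(t(1-t)))·f(t) with f ∈ Z[t] is dense in C_R(F') with the supremum norm. -/
open Polynomial Filter unitInterval

/-- If `1/2 ∉ F'`, the functions `t ↦ ((2t-1)/(t(1-t)))·f(t)`, `f ∈ ℤ[t]`,
are dense in `C_ℝ(F')` for the supremum norm. -/
theorem stmt1 (F' : Set ℝ) (hne : F'.Nonempty) (hclosed : IsClosed F')
    (hsub : F' ⊆ Set.Icc 0 1) (h0 : (0:ℝ) ∉ F') (h1 : (1:ℝ) ∉ F')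
    (hhalf : (1/2 : ℝ) ∉ F') :
    ∀ g : C(F', ℝ), ∀ ε : ℝ, 0 < ε →
      ∃ p : Polynomial ℤ, ∀ t : F',
        |g t - (2 * (t:ℝ) - 1) / ((t:ℝ) * (1 - (t:ℝ))) * Polynomial.aeval (t : ℝ) p| < ε := by
  intro g ε hε
  have hK : IsCompact F' := IsCompact.of_isClosed_subset isCompact_Icc hclosed hsub
  -- a positive margin δ
  obtain ⟨t₀, ht₀, hmin⟩ := hK.exists_isMinOn hne
    ((continuous_id.min (continuous_const.sub continuous_id)).continuousOn :
      ContinuousOn (fun t : ℝ => min t (1 - t)) F')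
  set δ : ℝ := min t₀ (1 - t₀) with hδdef
  have ht₀I := hsub ht₀
  have hδpos : 0 < δ := by
    have h0' : t₀ ≠ 0 := fun h => h0 (h ▸ ht₀)
    have h1' : t₀ ≠ 1 := fun h => h1 (h ▸ ht₀)
    have := ht₀I.1; have := ht₀I.2
    simp only [hδdef, lt_min_iff]
    constructor <;> [skip; skip] <;> cases' lt_or_eq_of_le ‹(0:ℝ) ≤ t₀› with h h
    · exact h
    · exact absurd h.symm h0'
    · cases' lt_or_eq_of_le ‹t₀ ≤ 1› with h2 h2
      · linarith
      · exact absurd h2 h1'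
    · exact absurd h.symm h0'
  have hδ1 : δ ≤ 1 - δ := by
    have := ht₀I.1; have := ht₀I.2
    cases' min_le_iff.mp (le_refl δ) with h h <;>
      linarith [min_le_left t₀ (1-t₀), min_le_right t₀ (1-t₀)]
  have hδmem : ∀ t ∈ F', δ ≤ t ∧ t ≤ 1 - δ := by
    intro t ht
    have h' := hmin ht
    simp only [Set.mem_setOf_eq, id, le_min_iff, Pi.sub_apply] at h'
    exact ⟨h'.1, by linarith [h'.2]⟩
  -- the function h = g/φ
  have hden : ∀ t : F', 2*(t:ℝ) - 1 ≠ 0 := by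
    intro t h
    apply hhalf
    have : ((1:ℝ)/2) = (t:ℝ) := by linarith
    rw [this]; exact t.2
  set h : C(F', ℝ) := ⟨fun t => g t * ((t:ℝ) * (1 - (t:ℝ))) / (2*(t:ℝ) - 1),
    (g.continuous.mul (continuous_subtype_val.mul
        (continuous_const.sub continuous_subtype_val))).div
      ((continuous_const.mul continuous_subtype_val).sub continuous_const) hden⟩ with hhdef
  -- Tietze extension
  obtain ⟨H, hH⟩ := ContinuousMap.exists_restrict_eq hclosed h
  set f : C(I, ℝ) := H.restrict I with hfdef
  set ε' : ℝ := ε * δ^2 / 2 with hε'def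
  have hε' : 0 < ε' := by positivity
  -- choose n
  have hr0 : (0:ℝ) ≤ 1 - δ := by linarith
  have hr1 : 1 - δ < 1 := by linarith
  have hlim : Tendsto (fun n : ℕ => ((n:ℝ)+1) * (1-δ)^n) atTop (nhds 0) := by
    have hnorm : ‖(1-δ : ℝ)‖ < 1 := by rwa [Real.norm_eq_abs, abs_of_nonneg hr0]
    have h1' := (summable_pow_mul_geometric_of_norm_lt_one 1 hnorm).tendsto_atTop_zero
    have h2' := tendsto_pow_atTop_nhds_zero_of_lt_one hr0 hr1
    have := h1'.add h2'
    simpa [add_mul, pow_one] using this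
  obtain ⟨N₁, hN₁⟩ := Metric.tendsto_atTop.mp (bernsteinApproximation_uniform f) ε' hε'
  obtain ⟨N₂, hN₂⟩ := Metric.tendsto_atTop.mp hlim ε' hε'
  set n : ℕ := max N₁ N₂ with hndef
  have hB : dist (bernsteinApproximation n f) f < ε' := hN₁ n (le_max_left _ _)
  have hR : ((n:ℝ)+1) * (1-δ)^n < ε' := by
    have := hN₂ n (le_max_right _ _)
    rwa [Real.dist_eq, sub_zero, abs_of_nonneg (by positivity)] at this
  -- the integer polynomial
  set q : Polynomial ℤ := ∑ k : Fin (n+1),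
      C ⌊f (bernstein.z k) * (n.choose k : ℝ)⌋ * X^(k:ℕ) * (1-X)^(n-(k:ℕ)) with hqdef
  have heval : ∀ x : ℝ, aeval x q =
      ∑ k : Fin (n+1), (⌊f (bernstein.z k) * (n.choose k : ℝ)⌋ : ℝ)
        * x^(k:ℕ) * (1-x)^(n-(k:ℕ)) := by
    intro x
    simp [hqdef, map_sum]
  have hqb : ∀ x : I, δ ≤ (x:ℝ) → (x:ℝ) ≤ 1 - δ →
      |bernsteinApproximation n f x - aeval (x:ℝ) q| ≤ ((n:ℝ)+1)*(1-δ)^n := by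
    intro x hx1 hx2
    have hx0 : (0:ℝ) ≤ x := le_trans hδpos.le hx1
    have hx3 : (1:ℝ) - (x:ℝ) ≤ 1 - δ := by linarith
    have hx4 : (0:ℝ) ≤ 1 - (x:ℝ) := by linarith
    rw [bernsteinApproximation.apply, heval, ← Finset.sum_sub_distrib]
    refine (Finset.abs_sum_le_sum_abs _ _).trans ?_
    have hterm : ∀ k : Fin (n+1),
        |f (bernstein.z k) * bernstein n k x -
          (⌊f (bernstein.z k) * (n.choose k : ℝ)⌋ : ℝ) * (x:ℝ)^(k:ℕ) * (1-(x:ℝ))^(n-(k:ℕ))|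
          ≤ (1-δ)^n := by
      intro k
      set c : ℝ := f (bernstein.z k) * (n.choose k : ℝ) with hcdef
      set P : ℝ := (x:ℝ)^(k:ℕ) * (1-(x:ℝ))^(n-(k:ℕ)) with hPdef
      have hPnn : 0 ≤ P := by positivity
      have hPle : P ≤ (1-δ)^n := by
        have e1 : (x:ℝ)^(k:ℕ) ≤ (1-δ)^(k:ℕ) := pow_le_pow_left₀ hx0 hx2 _
        have e2 : (1-(x:ℝ))^(n-(k:ℕ)) ≤ (1-δ)^(n-(k:ℕ)) := pow_le_pow_left₀ hx4 hx3 _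
        have e3 : P ≤ (1-δ)^(k:ℕ) * (1-δ)^(n-(k:ℕ)) := by
          apply mul_le_mul e1 e2 (by positivity) (by positivity)
        rw [← pow_add] at e3
        rwa [Nat.add_sub_cancel' (Nat.lt_succ_iff.mp k.2)] at e3
      have hb : f (bernstein.z k) * bernstein n k x = c * P := by
        rw [bernstein_apply, hcdef, hPdef]; ring
      rw [hb]
      have : c * P - (⌊c⌋ : ℝ) * (x:ℝ)^(k:ℕ) * (1-(x:ℝ))^(n-(k:ℕ)) = Int.fract c * P := by
        rw [← Int.self_sub_floor, hPdef]; ring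
      rw [this, abs_of_nonneg (mul_nonneg (Int.fract_nonneg c) hPnn)]
      calc Int.fract c * P ≤ 1 * ((1-δ)^n) :=
            mul_le_mul (Int.fract_lt_one c).le hPle hPnn zero_le_one
        _ = (1-δ)^n := one_mul _
    calc _
        ≤ ∑ _k : Fin (n+1), (1-δ)^n := Finset.sum_le_sum fun k _ => by
          rw [smul_eq_mul, mul_comm ((bernstein n k) x)]; exact hterm k
      _ = ((n:ℝ)+1)*(1-δ)^n := by
          rw [Finset.sum_const, Finset.card_univ, Fintype.card_fin, nsmul_eq_mul]
          push_cast; ring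
  refine ⟨q, ?_⟩
  intro t
  obtain ⟨hta, htb⟩ := hδmem (t:ℝ) t.2
  set x : I := ⟨(t:ℝ), hsub t.2⟩ with hxdef
  have hfx : f x = h t := by rw [← hH]; rfl
  have hb1 : |h t - bernsteinApproximation n f x| < ε' := by
    have := ContinuousMap.dist_apply_le_dist (f := bernsteinApproximation n f) (g := f) x
    have h2 := lt_of_le_of_lt this hB
    rw [Real.dist_eq, hfx] at h2
    rwa [abs_sub_comm] at h2
  have hb2 : |bernsteinApproximation n f x - aeval (t:ℝ) q| < ε' :=
    lt_of_le_of_lt (hqb x hta htb) hR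
  have htpos : 0 < (t:ℝ) * (1 - (t:ℝ)) := by nlinarith
  have hδ2 : δ^2 ≤ (t:ℝ) * (1 - (t:ℝ)) := by nlinarith
  have habs1 : |2*(t:ℝ) - 1| ≤ 1 := by
    rw [abs_le]; constructor <;> nlinarith
  have hphi : |(2*(t:ℝ) - 1) / ((t:ℝ) * (1 - (t:ℝ)))| ≤ 1/δ^2 := by
    rw [abs_div, abs_of_pos htpos]
    exact div_le_div₀ zero_le_one habs1 (pow_pos hδpos 2) hδ2
  have hgid : g t = (2*(t:ℝ) - 1) / ((t:ℝ) * (1 - (t:ℝ))) * h t := by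
    have hne1 : (t:ℝ) * (1 - (t:ℝ)) ≠ 0 := ne_of_gt htpos
    have hne2 : 2*(t:ℝ) - 1 ≠ 0 := hden t
    rw [hhdef]
    simp only [ContinuousMap.coe_mk]
    rw [div_mul_div_comm, eq_div_iff (mul_ne_zero hne1 hne2)]
    ring
  have hkey : |g t - (2*(t:ℝ) - 1) / ((t:ℝ) * (1 - (t:ℝ))) * aeval (t:ℝ) q|
      = |(2*(t:ℝ) - 1) / ((t:ℝ) * (1 - (t:ℝ)))| * |h t - aeval (t:ℝ) q| := by
    rw [hgid, ← mul_sub, abs_mul]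
  have hsum : |h t - aeval (t:ℝ) q| < 2 * ε' := by
    calc |h t - aeval (t:ℝ) q|
        ≤ |h t - bernsteinApproximation n f x| + |bernsteinApproximation n f x - aeval (t:ℝ) q| :=
          abs_sub_le _ _ _
      _ < 2 * ε' := by linarith
  calc |g t - (2*(t:ℝ) - 1) / ((t:ℝ) * (1 - (t:ℝ))) * aeval (t:ℝ) q|
      = |(2*(t:ℝ) - 1) / ((t:ℝ) * (1 - (t:ℝ)))| * |h t - aeval (t:ℝ) q| := hkey
    _ ≤ (1/δ^2) * |h t - aeval (t:ℝ) q| :=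
        mul_le_mul_of_nonneg_right hphi (abs_nonneg _)
    _ < (1/δ^2) * (2*ε') := by
        apply mul_lt_mul_of_pos_left hsum (by positivity)
    _ = ε := by rw [hε'def]; field_simp
end

section
/- If 1/2 ∈ F', then the set of functions on F' of the form t ↦ ((2t-1)/(t(1-t)))·f(t) with f ∈ Z[t] is dense in the closed subspace {g ∈ C_R(F') : g(1/2) = 0} with the supremum norm. -/
open Polynomial

lemma exists_q (k : ℕ) : ∃ q : Polynomial ℤ, 2 * q = 1 - (1 - 2*X)^k := by
  induction k with
  | zero => exact ⟨0, by simp⟩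
  | succ k ih =>
    obtain ⟨q, hq⟩ := ih
    refine ⟨q + X * (1 - 2*X)^k, ?_⟩
    have : (1 - 2*X : Polynomial ℤ)^(k+1) = (1-2*X)^k * (1-2*X) := pow_succ _ _
    linear_combination hq + this

lemma intpoly_dense (F' : Set ℝ) (hclosed : IsClosed F')
    (hsub : F' ⊆ Set.Icc 0 1) (h0 : (0:ℝ) ∉ F') (h1 : (1:ℝ) ∉ F')
    (hhalf : (1/2 : ℝ) ∈ F') :
    ∀ ψ : C(F', ℝ), ∀ η : ℝ, 0 < η → ∃ p : Polynomial ℤ, ∀ t : F',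
      |ψ t - Polynomial.aeval (t : ℝ) p| < η := by
  have hcomp : IsCompact F' := isCompact_Icc.of_isClosed_subset hclosed hsub
  haveI : CompactSpace F' := isCompact_iff_compactSpace.mp hcomp
  set xmap : C(F', ℝ) := ⟨fun t => (t : ℝ), continuous_subtype_val⟩ with hxmap
  let evalRH : ∀ t : F', C(F', ℝ) →+* ℝ := fun t =>
    (Pi.evalRingHom (fun _ => ℝ) t).comp ContinuousMap.coeFnRingHom
  have heval : ∀ (p : Polynomial ℤ) (t : F'),
      (Polynomial.aeval xmap p) t = Polynomial.aeval (t : ℝ) p := by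
    intro p t
    exact (Polynomial.aeval_algHom_apply ((evalRH t).toIntAlgHom) xmap p).symm
  let Sr : Subring C(F', ℝ) := (Polynomial.aeval (R := ℤ) xmap).range.toSubring
  -- lower bound δ₁
  obtain ⟨t₀, ht₀F, ht₀'⟩ := hcomp.exists_isMinOn ⟨1/2, hhalf⟩
    ((continuous_id.min (continuous_const.sub continuous_id)).continuousOn)
  have ht₀ : ∀ t ∈ F', min t₀ (1 - t₀) ≤ min t (1 - t) := fun t ht => ht₀' ht
  obtain ⟨ht₀0, ht₀1⟩ := hsub ht₀F
  set δ₁ : ℝ := min t₀ (1 - t₀) with hδ₁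
  have hδ₁pos : 0 < δ₁ := by
    rcases lt_or_eq_of_le ht₀0 with h | h
    · rcases lt_or_eq_of_le ht₀1 with h' | h'
      · exact lt_min h (by linarith)
      · exact absurd (h' ▸ ht₀F) h1
    · exact absurd (h ▸ ht₀F) h0
  have hδhalf : δ₁ ≤ 1/2 := le_trans (ht₀ _ hhalf) (by norm_num)
  set ρ : ℝ := 1 - 2*δ₁ with hρ
  have hρ0 : 0 ≤ ρ := by simp [hρ]; linarith
  have hρ1 : ρ < 1 := by simp [hρ]; linarith
  have hbound : ∀ t : F', |1 - 2*(t:ℝ)| ≤ ρ := by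
    rintro ⟨t, htF⟩
    have h1t : δ₁ ≤ min t (1 - t) := ht₀ t htF
    have h2 : δ₁ ≤ t := le_trans h1t (min_le_left _ _)
    have h3 : δ₁ ≤ 1 - t := le_trans h1t (min_le_right _ _)
    rw [abs_le]; constructor <;> simp [hρ] <;> linarith
  -- 1/2 constant in closure
  set T := Sr.topologicalClosure with hT
  have hmemT : ∀ f : C(F', ℝ), f ∈ closure (Sr : Set C(F', ℝ)) → f ∈ T := fun f h => h
  have hhalfT : (ContinuousMap.const F' (1/2 : ℝ)) ∈ T := by
    apply hmemT
    rw [Metric.mem_closure_iff]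
    intro ε hε
    obtain ⟨k, hk⟩ := exists_pow_lt_of_lt_one hε hρ1
    obtain ⟨q, hq⟩ := exists_q k
    refine ⟨Polynomial.aeval xmap q, ⟨⟨q, rfl⟩, ?_⟩⟩
    have hd : dist (ContinuousMap.const F' (1/2 : ℝ)) (Polynomial.aeval xmap q) ≤ ρ^k/2 := by
      rw [ContinuousMap.dist_le (by positivity)]
      intro t
      have h2q : 2 * Polynomial.aeval (t:ℝ) q = 1 - (1 - 2*(t:ℝ))^k := by
        have h := congrArg (Polynomial.aeval (t:ℝ)) hq
        have h2 : (Polynomial.aeval (t:ℝ)) (2:Polynomial ℤ) = 2 := map_ofNat _ 2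
        simp only [map_mul, map_sub, map_one, map_pow, Polynomial.aeval_X, h2] at h
        exact h
      rw [heval]
      rw [Real.dist_eq]
      have : (ContinuousMap.const F' (1/2:ℝ)) t - Polynomial.aeval (t:ℝ) q
          = (1 - 2*(t:ℝ))^k / 2 := by
        simp only [ContinuousMap.const_apply]
        linarith
      rw [this, abs_div]
      have : |(1 - 2*(t:ℝ))^k| ≤ ρ^k := by
        rw [abs_pow]
        exact pow_le_pow_left₀ (abs_nonneg _) (hbound t) k
      rw [abs_two]
      linarith
    calc dist (ContinuousMap.const F' (1/2 : ℝ)) (Polynomial.aeval xmap q)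
        ≤ ρ^k/2 := hd
      _ < ε := by linarith [pow_nonneg hρ0 k]
  -- all real constants in T
  have hconst : ∀ c : ℝ, (ContinuousMap.const F' c) ∈ T := by
    intro c
    set D : Set ℝ := {c : ℝ | (ContinuousMap.const F' c) ∈ T} with hD
    have hDclosed : IsClosed D := by
      have : D = (ContinuousMap.const F' (β := ℝ)) ⁻¹' (T : Set C(F', ℝ)) := rfl
      rw [this]
      exact IsClosed.preimage (ContinuousMap.continuous_const')
        (Subring.isClosed_topologicalClosure Sr)
    have hdy : ∀ (n : ℤ) (m : ℕ), ((n : ℝ) * (1/2)^m) ∈ D := by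
      intro n m
      have : ContinuousMap.const F' ((n:ℝ) * (1/2)^m)
          = (n : C(F', ℝ)) * (ContinuousMap.const F' (1/2:ℝ))^m := by
        ext t; simp
      show _ ∈ T
      rw [this]
      exact mul_mem (intCast_mem T n) (pow_mem hhalfT m)
    have : c ∈ closure D := by
      rw [Metric.mem_closure_iff]
      intro ε hε
      obtain ⟨m, hm⟩ := exists_pow_lt_of_lt_one hε (by norm_num : (1/2:ℝ) < 1)
      refine ⟨(⌊c * 2^m⌋ : ℝ) * (1/2)^m, hdy _ _, ?_⟩
      rw [Real.dist_eq]
      have h2m : (0:ℝ) < 2^m := by positivity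
      have hfl : (⌊c * 2^m⌋ : ℝ) ≤ c * 2^m := Int.floor_le _
      have hfl2 : c * 2^m < (⌊c * 2^m⌋ : ℝ) + 1 := Int.lt_floor_add_one _
      have heq : c - (⌊c * 2^m⌋:ℝ) * (1/2)^m = (c * 2^m - ⌊c * 2^m⌋) * (1/2)^m := by
        rw [sub_mul, mul_assoc c, ← mul_pow]; norm_num
      rw [heq, abs_mul, abs_of_nonneg (by positivity : (0:ℝ) ≤ (1/2:ℝ)^m)]
      calc |c * 2^m - ⌊c * 2^m⌋| * (1/2)^m ≤ 1 * (1/2)^m := by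
            apply mul_le_mul_of_nonneg_right _ (by positivity)
            rw [abs_le]; constructor <;> linarith
        _ < ε := by rw [one_mul]; exact hm
    rwa [hDclosed.closure_eq] at this
  -- Subalgebra
  let A : Subalgebra ℝ C(F', ℝ) :=
    { T.toSubsemiring with
      algebraMap_mem' := fun c => by
        have : algebraMap ℝ C(F', ℝ) c = ContinuousMap.const F' c := rfl
        show algebraMap ℝ C(F', ℝ) c ∈ T
        rw [this]; exact hconst c }
  have hsep : A.SeparatesPoints := by
    intro x y hxy
    refine ⟨_, ⟨xmap, ?_, rfl⟩, ?_⟩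
    · show xmap ∈ T
      exact Sr.le_topologicalClosure ⟨Polynomial.X, by simp⟩
    · intro h
      exact hxy (Subtype.ext h)
  have htop := ContinuousMap.subalgebra_topologicalClosure_eq_top_of_separatesPoints A hsep
  intro ψ η hη
  have hψ : ψ ∈ closure (A : Set C(F', ℝ)) := by
    have : ψ ∈ A.topologicalClosure := htop ▸ Algebra.mem_top
    exact this
  have hACl : (A : Set C(F', ℝ)) = closure (Sr : Set C(F', ℝ)) := rfl
  rw [hACl, closure_closure, Metric.mem_closure_iff] at hψ
  obtain ⟨b, hbSr, hbd⟩ := hψ η hη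
  obtain ⟨p, hp⟩ := hbSr
  refine ⟨p, fun t => ?_⟩
  have hb : b t = Polynomial.aeval (t:ℝ) p := by rw [← hp]; exact heval p t
  calc |ψ t - Polynomial.aeval (t:ℝ) p| = dist (ψ t) (b t) := by rw [hb, Real.dist_eq]
    _ ≤ dist ψ b := ContinuousMap.dist_apply_le_dist t
    _ < η := hbd

/-- If `1/2 ∈ F'`, the functions `t ↦ ((2t-1)/(t(1-t)))·f(t)`, `f ∈ ℤ[t]`,
are dense in `{g ∈ C_ℝ(F') : g(1/2) = 0}` for the supremum norm. -/
theorem stmt2 (F' : Set ℝ) (hclosed : IsClosed F')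
    (hsub : F' ⊆ Set.Icc 0 1) (h0 : (0:ℝ) ∉ F') (h1 : (1:ℝ) ∉ F')
    (hhalf : (1/2 : ℝ) ∈ F') :
    ∀ g : C(F', ℝ), (∀ t : F', (t : ℝ) = 1/2 → g t = 0) → ∀ ε : ℝ, 0 < ε →
      ∃ p : Polynomial ℤ, ∀ t : F',
        |g t - (2 * (t:ℝ) - 1) / ((t:ℝ) * (1 - (t:ℝ))) * Polynomial.aeval (t : ℝ) p| < ε := by
  intro g hg ε hε
  have hcomp : IsCompact F' := isCompact_Icc.of_isClosed_subset hclosed hsub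
  haveI : CompactSpace F' := isCompact_iff_compactSpace.mp hcomp
  set x₀ : F' := ⟨1/2, hhalf⟩ with hx₀
  have hg0 : g x₀ = 0 := hg x₀ rfl
  -- min of t(1-t)
  obtain ⟨t₀, ht₀F, ht₀'⟩ := hcomp.exists_isMinOn ⟨1/2, hhalf⟩
    ((continuous_id.mul (continuous_const.sub continuous_id)).continuousOn)
  have ht₀ : ∀ t ∈ F', t₀ * (1 - t₀) ≤ t * (1 - t) := fun t ht => ht₀' ht
  obtain ⟨ht₀0, ht₀1⟩ := hsub ht₀F
  set m : ℝ := t₀ * (1 - t₀) with hm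
  have hmpos : 0 < m := by
    rcases lt_or_eq_of_le ht₀0 with h | h
    · rcases lt_or_eq_of_le ht₀1 with h' | h'
      · apply mul_pos h; linarith
      · exact absurd (h' ▸ ht₀F) h1
    · exact absurd (h ▸ ht₀F) h0
  have hmem : ∀ t : F', (0:ℝ) ≤ (t:ℝ) ∧ (t:ℝ) ≤ 1 := fun t => ⟨(hsub t.2).1, (hsub t.2).2⟩
  have httpos : ∀ t : F', 0 < (t:ℝ) * (1 - (t:ℝ)) := fun t =>
    lt_of_lt_of_le hmpos (ht₀ _ t.2)
  -- norm bound
  set G : ℝ := ‖g‖ with hGdef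
  have hG : ∀ t : F', |g t| ≤ G := fun t => g.norm_coe_le_norm t
  have hG0 : 0 ≤ G := norm_nonneg g
  -- continuity at 1/2
  obtain ⟨δ, hδpos, hδ⟩ : ∃ δ > 0, ∀ t : F', |(t:ℝ) - 1/2| < δ → |g t| < ε/4 := by
    have hc := (map_continuous g).continuousAt (x := x₀)
    rw [Metric.continuousAt_iff] at hc
    obtain ⟨δ, hδpos, hδ⟩ := hc (ε/4) (by linarith)
    refine ⟨δ, hδpos, fun t ht => ?_⟩
    have hdist : dist t x₀ < δ := by
      rw [Subtype.dist_eq, Real.dist_eq]; exact ht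
    have := hδ hdist
    rwa [hg0, dist_zero_right, Real.norm_eq_abs] at this
  -- the smoothing parameter
  set θ : ℝ := (4*δ^2) * ε / (4*(G+1)) with hθdef
  have hθ : 0 < θ := by positivity
  -- the continuous function ψ
  have hcont : Continuous fun t : F' =>
      g t * ((t:ℝ)*(1-(t:ℝ))*(2*(t:ℝ)-1)/((2*(t:ℝ)-1)^2+θ)) := by
    apply (map_continuous g).mul
    apply Continuous.div
    · fun_prop
    · fun_prop
    · intro t; positivity
  set ψ : C(F', ℝ) := ⟨_, hcont⟩ with hψdef
  -- key estimate
  have hkey : ∀ t : F',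
      |g t - (2*(t:ℝ)-1) / ((t:ℝ)*(1-(t:ℝ))) * ψ t| ≤ ε/2 := by
    intro t
    have hden : 0 < (2*(t:ℝ)-1)^2 + θ := by positivity
    have htt : (t:ℝ) * (1 - (t:ℝ)) ≠ 0 := ne_of_gt (httpos t)
    have heq : g t - (2*(t:ℝ)-1) / ((t:ℝ)*(1-(t:ℝ))) * ψ t
        = g t * (θ / ((2*(t:ℝ)-1)^2 + θ)) := by
      show g t - (2*(t:ℝ)-1) / ((t:ℝ)*(1-(t:ℝ))) *
        (g t * ((t:ℝ)*(1-(t:ℝ))*(2*(t:ℝ)-1)/((2*(t:ℝ)-1)^2+θ))) = _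
      have h0' : (t:ℝ) ≠ 0 := left_ne_zero_of_mul htt
      have h1' : 1 - (t:ℝ) ≠ 0 := right_ne_zero_of_mul htt
      field_simp
      ring
    rw [heq, abs_mul]
    have hfac_nonneg : 0 ≤ θ / ((2*(t:ℝ)-1)^2 + θ) := by positivity
    have habs_fac : |θ / ((2*(t:ℝ)-1)^2 + θ)| = θ / ((2*(t:ℝ)-1)^2 + θ) :=
      abs_of_nonneg hfac_nonneg
    rw [habs_fac]
    rcases lt_or_ge (|(t:ℝ) - 1/2|) δ with hcase | hcase
    · -- near 1/2
      have h1 : |g t| ≤ ε/4 := le_of_lt (hδ t hcase)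
      have h2 : θ / ((2*(t:ℝ)-1)^2 + θ) ≤ 1 := by
        rw [div_le_one hden]; nlinarith
      nlinarith [abs_nonneg (g t)]
    · -- far from 1/2
      have h1 : (2*(t:ℝ)-1)^2 ≥ 4*δ^2 := by
        have : ((t:ℝ) - 1/2)^2 ≥ δ^2 := by
          have := abs_nonneg ((t:ℝ) - 1/2)
          nlinarith [sq_abs ((t:ℝ) - 1/2)]
        nlinarith
      have h2 : θ / ((2*(t:ℝ)-1)^2 + θ) ≤ θ / (4*δ^2) := by
        apply div_le_div_of_nonneg_left (le_of_lt hθ) (by positivity)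
        linarith
      have h3 : θ / (4*δ^2) = ε / (4*(G+1)) := by
        rw [hθdef]; field_simp
      have h4 : |g t| * (θ / ((2*(t:ℝ)-1)^2 + θ)) ≤ G * (ε / (4*(G+1))) := by
        apply mul_le_mul (hG t) (h3 ▸ h2) hfac_nonneg hG0
      have h5 : G * (ε / (4*(G+1))) ≤ ε/4 := by
        have hpos : (0:ℝ) < 4*(G+1) := by linarith
        have heq2 : G*(ε/(4*(G+1))) = (G*ε)/(4*(G+1)) := by ring
        rw [heq2, div_le_div_iff₀ hpos (by norm_num : (0:ℝ) < 4)]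
        nlinarith
      linarith
  -- bound on φ
  have hφbd : ∀ t : F', |(2*(t:ℝ)-1) / ((t:ℝ)*(1-(t:ℝ)))| ≤ 1/m := by
    intro t
    rw [abs_div]
    have h1 : |2*(t:ℝ)-1| ≤ 1 := by
      obtain ⟨ha, hb⟩ := hmem t
      rw [abs_le]; constructor <;> linarith
    have h2 : |(t:ℝ)*(1-(t:ℝ))| = (t:ℝ)*(1-(t:ℝ)) := abs_of_pos (httpos t)
    rw [h2]
    have h3 : m ≤ (t:ℝ)*(1-(t:ℝ)) := ht₀ _ t.2
    exact div_le_div₀ zero_le_one h1 hmpos h3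
  -- final assembly
  have hkey2 : ∀ u e : ℝ, 0 < u → 0 < e → u*(e/(4*(u+1))) ≤ e/4 := by
    intro u e hu he
    have hpos : (0:ℝ) < 4*(u+1) := by linarith
    have heq2 : u*(e/(4*(u+1))) = (u*e)/(4*(u+1)) := by ring
    rw [heq2, div_le_div_iff₀ hpos (by norm_num : (0:ℝ) < 4)]
    nlinarith
  obtain ⟨p, hp⟩ := intpoly_dense F' hclosed hsub h0 h1 hhalf ψ
    (ε/(4*(1/m+1))) (by positivity)
  refine ⟨p, fun t => ?_⟩
  have h6 := hp t
  set φ : ℝ := (2*(t:ℝ)-1) / ((t:ℝ)*(1-(t:ℝ))) with hφdef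
  have h7 : |g t - φ * Polynomial.aeval (t:ℝ) p|
      ≤ |g t - φ * ψ t| + |φ| * |ψ t - Polynomial.aeval (t:ℝ) p| := by
    have heq3 : g t - φ * Polynomial.aeval (t:ℝ) p
        = (g t - φ * ψ t) + φ * (ψ t - Polynomial.aeval (t:ℝ) p) := by ring
    rw [heq3]
    exact (abs_add_le _ _).trans (by rw [abs_mul])
  have h8 : |φ| * |ψ t - Polynomial.aeval (t:ℝ) p|
      ≤ (1/m) * (ε/(4*(1/m+1))) :=
    mul_le_mul (hφbd t) (le_of_lt h6) (abs_nonneg _) (by positivity)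
  have h9 : (1/m) * (ε/(4*(1/m+1))) ≤ ε/4 := hkey2 (1/m) ε (by positivity) hε
  have h10 := hkey t
  calc |g t - φ * Polynomial.aeval (t:ℝ) p|
      ≤ |g t - φ * ψ t| + |φ| * |ψ t - Polynomial.aeval (t:ℝ) p| := h7
    _ ≤ ε/2 + ε/4 := by rw [hφdef]; exact add_le_add h10 (h8.trans h9)
    _ < ε := by linarith
end

section
/- The set of functions on F' of the form t ↦ (2t-1)·h(t) with h ∈ C_R(F') is dense in {g ∈ C_R(F') : g(1/2) = 0}, when 1/2 ∈ F'. -/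
/-- If `1/2 ∈ F'`, the functions `t ↦ (2t-1)·h(t)` with `h ∈ C_ℝ(F')`
are dense in `{g ∈ C_ℝ(F') : g(1/2) = 0}` for the supremum norm. -/
theorem stmt3 (F' : Set ℝ) (hclosed : IsClosed F')
    (hsub : F' ⊆ Set.Icc 0 1) (h0 : (0:ℝ) ∉ F') (h1 : (1:ℝ) ∉ F')
    (hhalf : (1/2 : ℝ) ∈ F') :
    ∀ g : C(F', ℝ), (∀ t : F', (t : ℝ) = 1/2 → g t = 0) → ∀ ε : ℝ, 0 < ε →
      ∃ h : C(F', ℝ), ∀ t : F', |g t - (2 * (t:ℝ) - 1) * h t| < ε := by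
  intro g hg0 ε hε
  set x₀ : F' := ⟨1/2, hhalf⟩ with hx₀
  have hgx₀ : g x₀ = 0 := hg0 x₀ rfl
  -- continuity of g at x₀
  have hcont : ContinuousAt g x₀ := g.continuous.continuousAt
  rw [Metric.continuousAt_iff] at hcont
  obtain ⟨δ, hδ, hδ'⟩ := hcont (ε/2) (by positivity)
  set c : ℝ := 2 * δ with hc
  have hcpos : 0 < c := by positivity
  have hden : ∀ t : F', max ((2*(t:ℝ)-1)^2) (c^2) ≠ 0 := by
    intro t
    have : (0:ℝ) < c^2 := by positivity
    have := lt_of_lt_of_le this (le_max_right ((2*(t:ℝ)-1)^2) (c^2))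
    exact ne_of_gt this
  refine ⟨⟨fun t => g t * (2*(t:ℝ)-1) / max ((2*(t:ℝ)-1)^2) (c^2), ?_⟩, ?_⟩
  · apply Continuous.div
    · exact (g.continuous.mul (by fun_prop))
    · exact Continuous.max (by fun_prop) continuous_const
    · exact hden
  · intro t
    simp only [ContinuousMap.coe_mk]
    rcases le_or_gt (c^2) ((2*(t:ℝ)-1)^2) with hcase | hcase
    · -- max is (2t-1)^2, expression equals g t exactly
      rw [max_eq_left hcase]
      have hne : (2*(t:ℝ)-1) ≠ 0 := by
        intro h
        rw [h] at hcase
        simp at hcase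
        nlinarith
      have : (2 * (t:ℝ) - 1) * (g t * (2*(t:ℝ)-1) / (2*(t:ℝ)-1)^2) = g t := by
        field_simp
      rw [this]
      simpa using hε
    · -- max is c^2, |2t-1| < c so t close to 1/2
      rw [max_eq_right hcase.le]
      have habs : |2*(t:ℝ)-1| < c := by
        nlinarith [sq_abs (2*(t:ℝ)-1), abs_nonneg (2*(t:ℝ)-1)]
      have hdist : dist t x₀ < δ := by
        rw [Subtype.dist_eq, Real.dist_eq]
        have : (t:ℝ) - 1/2 = (2*(t:ℝ)-1)/2 := by ring
        rw [this, abs_div]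
        rw [abs_of_pos (by norm_num : (0:ℝ) < 2)]
        linarith [habs]
      have hgsmall : |g t| < ε/2 := by
        have := hδ' hdist
        rwa [hgx₀, dist_zero_right, Real.norm_eq_abs] at this
      have hr0 : 0 ≤ (2*(t:ℝ)-1)^2 / c^2 := by positivity
      have hr1 : (2*(t:ℝ)-1)^2 / c^2 ≤ 1 := by
        rw [div_le_one (by positivity)]
        exact hcase.le
      have hrw : g t - (2 * (t:ℝ) - 1) * (g t * (2*(t:ℝ)-1) / c^2)
          = g t * (1 - (2*(t:ℝ)-1)^2 / c^2) := by
        field_simp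
      rw [hrw, abs_mul]
      have hfac : |1 - (2*(t:ℝ)-1)^2 / c^2| ≤ 1 := by
        rw [abs_le]; constructor <;> linarith
      calc |g t| * |1 - (2*(t:ℝ)-1)^2 / c^2| ≤ |g t| * 1 :=
            mul_le_mul_of_nonneg_left hfac (abs_nonneg _)
        _ = |g t| := mul_one _
        _ < ε/2 := hgsmall
        _ < ε := by linarith
end

section
/- Every nonzero element of G_F^+ is an order unit for (G_0, G_F^+): for every x ∈ G_F^+ \ {0} and every y ∈ G_0 there exists k ∈ N with k·x − y ∈ G_F^+. -/
open scoped BigOperators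

noncomputable section

/-- The open interval `(0,1)` on which the functions of `G₀ = ℤ[t,t⁻¹,(1-t)⁻¹]` live. -/
def I01 : Set ℝ := Set.Ioo 0 1

/-- Membership in `G₀ = ℤ[t,t⁻¹,(1-t)⁻¹]`, viewed as continuous functions on `(0,1)`:
`f ∈ G₀` iff `f(t) = p(t)/(tᵐ(1-t)ⁿ)` for some integer polynomial `p`. -/
def memG0 (f : I01 → ℝ) : Prop :=
  ∃ (p : Polynomial ℤ) (m n : ℕ),
    ∀ t : I01, f t = (Polynomial.aeval (t : ℝ) p) / ((t : ℝ) ^ m * (1 - (t : ℝ)) ^ n)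

/-- The positive cone `G_F⁺ = {f ∈ G₀ : f > 0 on F} ∪ {0}`. -/
def memGFp (F : Set ℝ) (f : I01 → ℝ) : Prop :=
  memG0 f ∧ ((∀ t : I01, (t : ℝ) ∈ F → 0 < f t) ∨ f = 0)

/-- Membership in `G = ⊕_{n ∈ ℤ} G₀` (finitely supported sequences of elements of `G₀`). -/
def memG (x : ℤ → I01 → ℝ) : Prop :=
  (∀ n : ℤ, memG0 (x n)) ∧ {n : ℤ | x n ≠ 0}.Finite

/-- `Σ_{n ∈ ℤ} αⁿ(xₙ)(t)`, where `α` is multiplication by `t/(1-t)`. -/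
def sumAlpha (x : ℤ → I01 → ℝ) (t : I01) : ℝ :=
  ∑ᶠ n : ℤ, ((t : ℝ) / (1 - (t : ℝ))) ^ n * x n t

/-- `Σ_{n ∈ ℤ} xₙ(t)`. -/
def sumPlain (x : ℤ → I01 → ℝ) (t : I01) : ℝ := ∑ᶠ n : ℤ, x n t

/-- The automorphism `γ₊ : G → G`, `γ₊((xₙ)ₙ) = (α(x_{n+1}))ₙ`. -/
def gammaStar (x : ℤ → I01 → ℝ) : ℤ → I01 → ℝ :=
  fun n t => ((t : ℝ) / (1 - (t : ℝ))) * x (n + 1) t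

/-- The positive cone `G⁺` of `G` determined by `F` and `F₁`. -/
def memGplus (F F1 : Set ℝ) (x : ℤ → I01 → ℝ) : Prop :=
  memG x ∧
    (((∀ t : I01, (t : ℝ) ∈ F → 0 < sumAlpha x t) ∧
      (∀ t : I01, (t : ℝ) ∈ F1 → 0 < sumPlain x t)) ∨ x = 0)

/-- The cone `G⁺⁺ = {0} ∪ {x ∈ G : Σₙ αⁿ(xₙ) > 0 on F}`. -/
def memGpp (F : Set ℝ) (x : ℤ → I01 → ℝ) : Prop :=
  memG x ∧ ((∀ t : I01, (t : ℝ) ∈ F → 0 < sumAlpha x t) ∨ x = 0)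

/-- The sequence in `G` supported at `n = 0` with value `a`. -/
def delta0 (a : I01 → ℝ) : ℤ → I01 → ℝ := fun n => if n = 0 then a else 0


/-- every nonzero element of `G_F⁺` is an order unit for `(G₀, G_F⁺)`. -/
theorem stmt6 (F : Set ℝ) (hFne : F.Nonempty) (hFc : IsClosed F)
    (hFsub : F ⊆ Set.Icc 0 1) (hF0 : (0:ℝ) ∉ F) (hF1 : (1:ℝ) ∉ F) :
    ∀ f : I01 → ℝ, memGFp F f → f ≠ 0 → ∀ g : I01 → ℝ, memG0 g →
      ∃ k : ℕ, memGFp F (k • f - g) := by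
  intro f hf hf0 g hg
  obtain ⟨hfG0, hfpos | rfl⟩ := hf
  · obtain ⟨p, m, n, hp⟩ := hfG0
    obtain ⟨q, a, b, hq⟩ := hg
    have hFI : ∀ t ∈ F, t ∈ I01 := by
      intro t ht
      rcases hFsub ht with ⟨h0, h1⟩
      refine ⟨lt_of_le_of_ne h0 ?_, lt_of_le_of_ne h1 ?_⟩
      · rintro rfl; exact hF0 ht
      · rintro rfl; exact hF1 ht
    have hden : ∀ t ∈ F, ∀ (m n : ℕ), t ^ m * (1 - t) ^ n ≠ 0 := by
      intro t ht m n
      obtain ⟨h0, h1⟩ := hFI t ht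
      exact mul_ne_zero (pow_ne_zero _ h0.ne') (pow_ne_zero _ (sub_pos.mpr h1).ne')
    have hcont : ∀ (r : Polynomial ℤ) (m n : ℕ),
        ContinuousOn (fun t : ℝ => (Polynomial.aeval t r) / (t ^ m * (1 - t) ^ n)) F := by
      intro r m n
      apply ContinuousOn.div
      · exact (Polynomial.continuous_aeval r).continuousOn
      · fun_prop
      · intro t ht; exact hden t ht m n
    have hK : IsCompact F := isCompact_Icc.of_isClosed_subset hFc hFsub
    obtain ⟨t0, ht0, hmin⟩ := hK.exists_isMinOn hFne (hcont p m n)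
    obtain ⟨t1, ht1, hmax⟩ := hK.exists_isMaxOn hFne (hcont q a b)
    set φf : ℝ → ℝ := fun t : ℝ => (Polynomial.aeval t p) / (t ^ m * (1 - t) ^ n)
    set φg : ℝ → ℝ := fun t : ℝ => (Polynomial.aeval t q) / (t ^ a * (1 - t) ^ b)
    have hε : 0 < φf t0 := by
      have := hfpos ⟨t0, hFI t0 ht0⟩ ht0
      rwa [hp ⟨t0, hFI t0 ht0⟩] at this
    obtain ⟨k, hk⟩ := exists_nat_gt (φg t1 / φf t0)
    refine ⟨k, ?_, ?_⟩
    · refine ⟨Polynomial.C (k : ℤ) * p * (Polynomial.X ^ a * (1 - Polynomial.X) ^ b)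
        - q * (Polynomial.X ^ m * (1 - Polynomial.X) ^ n), m + a, n + b, ?_⟩
      intro t
      obtain ⟨ht0', ht1'⟩ := t.2
      have htne : (t : ℝ) ≠ 0 := ht0'.ne'
      have h1ne : (1 : ℝ) - t ≠ 0 := (sub_pos.mpr ht1').ne'
      simp only [Pi.sub_apply, Pi.smul_apply, smul_eq_mul, hp, hq, map_sub, map_mul,
        map_pow, Polynomial.aeval_X, map_one, Polynomial.aeval_C]
      push_cast
      field_simp
      have e1 : (t:ℝ)^m * (t:ℝ)⁻¹^m = 1 := by rw [← mul_pow, mul_inv_cancel₀ htne, one_pow]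
      have e2 : (1 - (t:ℝ))⁻¹^n * (1 - (t:ℝ))^n = 1 := by rw [← mul_pow, inv_mul_cancel₀ h1ne, one_pow]
      linear_combination ((Polynomial.aeval (t:ℝ)) p * (t:ℝ) ^ (a * 2) * (k:ℝ) * (1 - (t:ℝ)) ^ (b * 2)) * (((1 - (t:ℝ))⁻¹^n * (1 - (t:ℝ))^n) * e1 + e2)
    · left
      intro t ht
      have hmint : φf t0 ≤ φf (t : ℝ) := hmin ht
      have hmaxt : φg (t : ℝ) ≤ φg t1 := hmax ht
      have hkε : φg t1 < k * φf t0 := (div_lt_iff₀ hε).mp hk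
      have h1 : (k : ℝ) * φf t0 ≤ (k : ℝ) * φf (t : ℝ) :=
        mul_le_mul_of_nonneg_left hmint (Nat.cast_nonneg k)
      have heval : (k • f - g) t = (k : ℝ) * φf (t : ℝ) - φg (t : ℝ) := by
        simp only [Pi.sub_apply, Pi.smul_apply, smul_eq_mul, nsmul_eq_mul, Pi.mul_apply, Pi.natCast_apply, hp, hq]
        rfl
      rw [heval]
      linarith
  · exact absurd rfl hf0

end
end

section
/- Let G^+ ⊆ G be as defined. Then G^+ + G^+ ⊆ G^+, G^+ ∩ (−G^+) = {0}, and (G, G^+) is unperforated. -/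
open scoped BigOperators

noncomputable section

/-! ### Auxiliary lemmas -/

lemma memG0_add {f g : I01 → ℝ} (hf : memG0 f) (hg : memG0 g) : memG0 (f + g) := by
  obtain ⟨p, m, n, hp⟩ := hf
  obtain ⟨q, m', n', hq⟩ := hg
  refine ⟨p * Polynomial.X ^ m' * (1 - Polynomial.X) ^ n'
        + q * Polynomial.X ^ m * (1 - Polynomial.X) ^ n, m + m', n + n', ?_⟩
  intro t
  have ht0 : (t:ℝ) ≠ 0 := ne_of_gt t.2.1
  have ht1 : (1 - (t:ℝ)) ≠ 0 := sub_ne_zero.2 (ne_of_lt t.2.2).symm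
  simp only [Pi.add_apply, hp t, hq t, map_add, map_mul, map_pow, map_sub, map_one,
    Polynomial.aeval_X]
  field_simp
  ring

lemma memG_add {x y : ℤ → I01 → ℝ} (hx : memG x) (hy : memG y) : memG (x + y) := by
  refine ⟨fun n => memG0_add (hx.1 n) (hy.1 n), (hx.2.union hy.2).subset ?_⟩
  intro n hn
  by_contra h
  simp only [Set.mem_union, Set.mem_setOf_eq, not_or, not_not] at h
  exact hn (by simp [Pi.add_apply, h.1, h.2])

lemma supp_alpha_fin {x : ℤ → I01 → ℝ} (hx : {n : ℤ | x n ≠ 0}.Finite) (t : I01) :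
    (Function.support fun n : ℤ => ((t : ℝ) / (1 - (t : ℝ))) ^ n * x n t).Finite := by
  refine hx.subset ?_
  intro n hn
  simp only [Function.mem_support] at hn
  simp only [Set.mem_setOf_eq]
  intro h
  exact hn (by rw [h]; simp)

lemma supp_plain_fin {x : ℤ → I01 → ℝ} (hx : {n : ℤ | x n ≠ 0}.Finite) (t : I01) :
    (Function.support fun n : ℤ => x n t).Finite := by
  refine hx.subset ?_
  intro n hn
  simp only [Function.mem_support] at hn
  simp only [Set.mem_setOf_eq]
  intro h
  exact hn (by rw [h]; simp)

lemma sumAlpha_add {x y : ℤ → I01 → ℝ} (hx : {n : ℤ | x n ≠ 0}.Finite)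
    (hy : {n : ℤ | y n ≠ 0}.Finite) (t : I01) :
    sumAlpha (x + y) t = sumAlpha x t + sumAlpha y t := by
  unfold sumAlpha
  rw [← finsum_add_distrib (supp_alpha_fin hx t) (supp_alpha_fin hy t)]
  apply finsum_congr
  intro n
  simp [Pi.add_apply, mul_add]

lemma sumPlain_add {x y : ℤ → I01 → ℝ} (hx : {n : ℤ | x n ≠ 0}.Finite)
    (hy : {n : ℤ | y n ≠ 0}.Finite) (t : I01) :
    sumPlain (x + y) t = sumPlain x t + sumPlain y t := by
  unfold sumPlain
  rw [← finsum_add_distrib (supp_plain_fin hx t) (supp_plain_fin hy t)]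
  apply finsum_congr
  intro n
  simp [Pi.add_apply]

lemma sumAlpha_nsmul {x : ℤ → I01 → ℝ} (hx : {n : ℤ | x n ≠ 0}.Finite) (k : ℕ) (t : I01) :
    sumAlpha (k • x) t = (k : ℝ) * sumAlpha x t := by
  unfold sumAlpha
  rw [mul_finsum]
  apply finsum_congr
  intro n
  simp only [Pi.smul_apply, nsmul_eq_mul]
  ring

lemma sumPlain_nsmul {x : ℤ → I01 → ℝ} (hx : {n : ℤ | x n ≠ 0}.Finite) (k : ℕ) (t : I01) :
    sumPlain (k • x) t = (k : ℝ) * sumPlain x t := by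
  unfold sumPlain
  rw [mul_finsum]
  apply finsum_congr
  intro n
  simp [Pi.smul_apply, nsmul_eq_mul]

lemma sumAlpha_neg {x : ℤ → I01 → ℝ} (t : I01) :
    sumAlpha (-x) t = - sumAlpha x t := by
  unfold sumAlpha
  rw [← finsum_neg_distrib]
  apply finsum_congr
  intro n
  simp [Pi.neg_apply]

/-- `G⁺ + G⁺ ⊆ G⁺`, `G⁺ ∩ (−G⁺) = {0}`, and `(G, G⁺)` is unperforated. -/
theorem stmt7 (F : Set ℝ) (hFne : F.Nonempty) (hFc : IsClosed F)
    (hFsub : F ⊆ Set.Icc 0 1) (hF0 : (0:ℝ) ∉ F) (hF1 : (1:ℝ) ∉ F)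
    (F1 : Set ℝ) (hF1c : IsClosed F1)
    (hF1sub : F1 ⊆ Set.Icc 0 1) (hF10 : (0:ℝ) ∉ F1) (hF11 : (1:ℝ) ∉ F1) :
    (∀ x y : ℤ → I01 → ℝ, memGplus F F1 x → memGplus F F1 y → memGplus F F1 (x + y)) ∧
    (∀ x : ℤ → I01 → ℝ, memGplus F F1 x → memGplus F F1 (-x) → x = 0) ∧
    (∀ x : ℤ → I01 → ℝ, memG x → ∀ n : ℕ, 1 ≤ n → memGplus F F1 (n • x) →
      memGplus F F1 x) := by
  refine ⟨?_, ?_, ?_⟩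
  · -- addition
    rintro x y ⟨hxG, hxP⟩ ⟨hyG, hyP⟩
    refine ⟨memG_add hxG hyG, ?_⟩
    rcases hxP with hxP | rfl
    · rcases hyP with hyP | rfl
      · left
        constructor
        · intro t ht
          rw [sumAlpha_add hxG.2 hyG.2 t]
          exact add_pos (hxP.1 t ht) (hyP.1 t ht)
        · intro t ht
          rw [sumPlain_add hxG.2 hyG.2 t]
          exact add_pos (hxP.2 t ht) (hyP.2 t ht)
      · left
        simpa using hxP
    · rw [zero_add]
      exact hyP
  · -- antisymmetry
    rintro x ⟨hxG, hxP⟩ ⟨hnG, hnP⟩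
    rcases hxP with hxP | rfl
    · rcases hnP with hnP | hn0
      · obtain ⟨s, hsF⟩ := hFne
        have hs01 : s ∈ Set.Icc (0:ℝ) 1 := hFsub hsF
        have hs0 : (0:ℝ) < s := lt_of_le_of_ne hs01.1 (fun h => hF0 (h ▸ hsF))
        have hs1 : s < 1 := lt_of_le_of_ne hs01.2 (fun h => hF1 (h ▸ hsF))
        set ts : I01 := ⟨s, hs0, hs1⟩
        have h1 := hxP.1 ts hsF
        have h2 := hnP.1 ts hsF
        rw [sumAlpha_neg] at h2
        linarith
      · have := congrArg Neg.neg hn0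
        simpa using this
    · rfl
  · -- unperforation
    rintro x hxG n hn ⟨-, hP⟩
    have hnR : (0:ℝ) < (n:ℝ) := by exact_mod_cast hn.trans_lt' (by norm_num)
    refine ⟨hxG, ?_⟩
    rcases hP with hP | h0
    · left
      constructor
      · intro t ht
        have := hP.1 t ht
        rw [sumAlpha_nsmul hxG.2 n t] at this
        nlinarith [this, hnR]
      · intro t ht
        have := hP.2 t ht
        rw [sumPlain_nsmul hxG.2 n t] at this
        nlinarith [this, hnR]
    · right
      funext m t
      have : (n • x) m t = 0 := by rw [h0]; rfl
      simp only [Pi.smul_apply, nsmul_eq_mul] at this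
      have := mul_eq_zero.mp this
      rcases this with h | h
      · exact absurd h (ne_of_gt hnR)
      · exact h

end
end

section
/- For each t ∈ (0,1), the map φ_t : G → R given by φ_t((x_n)_n) = Σ_{n∈Z} (t/(1−t))^n · x_n(t) is a group homomorphism satisfying φ_t ∘ γ_* = φ_t (i.e. it is γ_*-invariant), and if t ∈ F it is positive on G^+. -/
open scoped BigOperators

noncomputable section

/-- for `t ∈ (0,1)` the map `φₜ(x) = Σₙ (t/(1-t))ⁿ xₙ(t)` is an additive,
`γ₊`-invariant map on `G`, positive on `G⁺` when `t ∈ F`. -/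
theorem stmt11 (F : Set ℝ) (hFne : F.Nonempty) (hFc : IsClosed F)
    (hFsub : F ⊆ Set.Icc 0 1) (hF0 : (0:ℝ) ∉ F) (hF1 : (1:ℝ) ∉ F)
    (F1 : Set ℝ) (hF1c : IsClosed F1)
    (hF1sub : F1 ⊆ Set.Icc 0 1) (hF10 : (0:ℝ) ∉ F1) (hF11 : (1:ℝ) ∉ F1) :
    ∀ t : I01,
      (∀ x y : ℤ → I01 → ℝ, memG x → memG y →
        sumAlpha (x + y) t = sumAlpha x t + sumAlpha y t) ∧
      (∀ x : ℤ → I01 → ℝ, memG x → sumAlpha (gammaStar x) t = sumAlpha x t) ∧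
      ((t : ℝ) ∈ F → ∀ x : ℤ → I01 → ℝ, memGplus F F1 x → 0 ≤ sumAlpha x t) := by
  intro t
  obtain ⟨ht0, ht1⟩ := t.2
  set r : ℝ := (t : ℝ) / (1 - (t : ℝ)) with hrdef
  have hr : 0 < r := div_pos ht0 (by linarith)
  have hrne : r ≠ 0 := hr.ne'
  have hsupp : ∀ x : ℤ → I01 → ℝ, memG x →
      (Function.support fun n : ℤ => r ^ n * x n t).Finite := by
    intro x hx
    apply hx.2.subset
    intro n hn
    simp only [Function.mem_support] at hn
    intro h
    apply hn
    rw [h]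
    simp
  refine ⟨?_, ?_, ?_⟩
  · intro x y hx hy
    unfold sumAlpha
    have h1 : (∑ᶠ n : ℤ, r ^ n * (x + y) n t)
        = ∑ᶠ n : ℤ, (r ^ n * x n t + r ^ n * y n t) := by
      apply finsum_congr
      intro n
      simp [mul_add]
    rw [h1, finsum_add_distrib (hsupp x hx) (hsupp y hy)]
  · intro x hx
    unfold sumAlpha gammaStar
    have h1 : (∑ᶠ n : ℤ, r ^ n * (r * x (n + 1) t))
        = ∑ᶠ n : ℤ, r ^ (n + 1) * x (n + 1) t := by
      apply finsum_congr
      intro n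
      rw [zpow_add_one₀ hrne]
      ring
    rw [h1]
    exact finsum_comp_equiv (Equiv.addRight (1 : ℤ)) (f := fun n : ℤ => r ^ n * x n t)
  · intro htF x hx
    rcases hx.2 with ⟨h1, _⟩ | h0
    · exact (h1 t htF).le
    · subst h0
      unfold sumAlpha
      simp
end
end

section
/- Let B be a C*-algebra, γ an automorphism of B, and P : B ⋊_γ Z → B the canonical conditional expectation. If ω is a lower semicontinuous densely defined weight on B ⋊_γ Z invariant under the dual circle action γ̂, then ω ∘ P ≤ ω on positive elements; i.e. ω(P(a)) ≤ ω(a) for all a ≥ 0. -/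
open scoped ENNReal

open Filter intervalIntegral

theorem riemann_aux {A : Type*} [NormedAddCommGroup A] [NormedSpace ℝ A] [CompleteSpace A]
    (f : ℝ → A) (hf : Continuous f) {T : ℝ} (hT : 0 < T) :
    Filter.Tendsto (fun n : ℕ => (T / n) • ∑ k ∈ Finset.range n, f (k * (T / n)))
      atTop (nhds (∫ t in (0 : ℝ)..T, f t)) := by
  rw [Metric.tendsto_atTop]
  intro ε hε
  set ε' : ℝ := ε / (2 * T) with hε'def
  have hε' : 0 < ε' := by positivity
  have huc : UniformContinuousOn f (Set.Icc 0 T) :=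
    isCompact_Icc.uniformContinuousOn_of_continuous hf.continuousOn
  rw [Metric.uniformContinuousOn_iff] at huc
  obtain ⟨δ, hδ, hδf⟩ := huc ε' hε'
  obtain ⟨N, hN⟩ := exists_nat_gt (T / δ)
  refine ⟨N + 1, fun n hn => ?_⟩
  have hn1 : 1 ≤ n := le_trans (Nat.le_add_left 1 N) hn
  have hnpos : (0 : ℝ) < n := by exact_mod_cast hn1
  set h : ℝ := T / n with hhdef
  have hh : 0 < h := div_pos hT hnpos
  have hNn : T / δ < (n : ℝ) := lt_of_lt_of_le hN (by exact_mod_cast le_trans (Nat.le_succ N) hn)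
  have hhδ : h < δ := by
    rw [hhdef, div_lt_iff₀ hnpos]
    calc T = (T / δ) * δ := by field_simp
    _ < n * δ := mul_lt_mul_of_pos_right hNn hδ
    _ = δ * n := mul_comm _ _
  have hint : ∀ (u v : ℝ), IntervalIntegrable f MeasureTheory.volume u v :=
    fun u v => hf.intervalIntegrable u v
  have hsum : ∑ k ∈ Finset.range n, ∫ t in (k * h : ℝ)..((k + 1 : ℕ) * h), f t
      = ∫ t in (0 : ℝ)..T, f t := by
    have := sum_integral_adjacent_intervals (a := fun k : ℕ => k * h) (n := n)
      (f := f) (μ := MeasureTheory.volume) (fun i _ => hint _ _)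
    simpa [hhdef, mul_div_cancel₀ T (ne_of_gt hnpos)] using this
  have hconst : (T / n) • ∑ k ∈ Finset.range n, f (k * h)
      = ∑ k ∈ Finset.range n, ∫ t in (k * h : ℝ)..((k + 1 : ℕ) * h), f (k * h) := by
    rw [Finset.smul_sum]
    refine Finset.sum_congr rfl fun k _ => ?_
    rw [integral_const]
    congr 1
    push_cast
    ring
  have key : ‖(∫ t in (0 : ℝ)..T, f t) - (T / n) • ∑ k ∈ Finset.range n, f (k * h)‖
      ≤ n * (ε' * h) := by
    rw [hconst, ← hsum, ← Finset.sum_sub_distrib]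
    refine le_trans (norm_sum_le _ _) ?_
    have hterm : ∀ i ∈ Finset.range n,
        ‖(∫ t in (i * h : ℝ)..((i + 1 : ℕ) * h), f t)
          - ∫ t in (i * h : ℝ)..((i + 1 : ℕ) * h), f (i * h)‖ ≤ ε' * h := by
      intro i hi
      rw [← integral_sub (hint _ _) intervalIntegrable_const]
      have hb : ‖∫ t in (i * h : ℝ)..((i + 1 : ℕ) * h), (f t - f (i * h))‖
          ≤ ε' * |((i + 1 : ℕ) * h : ℝ) - i * h| := by
        apply norm_integral_le_of_norm_le_const
        intro t ht
        have hle : (i * h : ℝ) < ((i + 1 : ℕ) * h : ℝ) := by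
          push_cast; nlinarith
        rw [Set.uIoc_of_le hle.le] at ht
        have h1 : (0 : ℝ) ≤ i * h := by positivity
        have h2 : t ≤ T := by
          have : ((i + 1 : ℕ) : ℝ) * h ≤ n * h := by
            have : (i + 1 : ℕ) ≤ n := Nat.succ_le_of_lt (Finset.mem_range.mp hi)
            exact mul_le_mul_of_nonneg_right (by exact_mod_cast this) hh.le
          have hnh : (n : ℝ) * h = T := by
            rw [hhdef]; field_simp
          linarith [ht.2]
        have htI : t ∈ Set.Icc (0:ℝ) T := ⟨le_trans h1 ht.1.le, h2⟩
        have hiI : (i * h : ℝ) ∈ Set.Icc (0:ℝ) T := by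
          constructor
          · exact h1
          · nlinarith [ht.1, ht.2, h2]
        have hd : dist t (i * h : ℝ) < δ := by
          rw [Real.dist_eq, abs_of_nonneg (by linarith [ht.1.le])]
          have : t - i * h ≤ h := by push_cast at ht ⊢; nlinarith [ht.2]
          linarith
        have := hδf t htI (i * h) hiI hd
        rw [dist_eq_norm] at this
        exact this.le
      refine le_trans hb ?_
      have : |((i + 1 : ℕ) * h : ℝ) - i * h| = h := by
        push_cast
        rw [abs_of_nonneg] <;> nlinarith
      rw [this]
    calc ∑ i ∈ Finset.range n, ‖(∫ t in (i * h : ℝ)..((i + 1 : ℕ) * h), f t)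
          - ∫ t in (i * h : ℝ)..((i + 1 : ℕ) * h), f (i * h)‖
        ≤ ∑ _i ∈ Finset.range n, (ε' * h) := Finset.sum_le_sum hterm
      _ = n * (ε' * h) := by rw [Finset.sum_const, Finset.card_range, nsmul_eq_mul]
  rw [dist_eq_norm, norm_sub_rev]
  refine lt_of_le_of_lt key ?_
  have : (n : ℝ) * (ε' * h) = ε / 2 := by
    rw [hhdef, hε'def]; field_simp
  rw [this]
  linarith

/-- if `γ̂` is a `2π`-periodic flow (of star-algebra automorphisms) on a
C*-algebra (modelling the dual action on a crossed product `B ⋊_γ ℤ`),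
`P(a) = (2π)⁻¹ ∫₀^{2π} γ̂_t(a) dt` the associated conditional expectation, and `ω` a
`γ̂`-invariant lower semicontinuous (densely defined) weight, then `ω(P(a)) ≤ ω(a)` for all
`a ≥ 0`. -/
theorem stmt19 {A : Type*} [NormedRing A] [StarRing A] [CStarRing A]
    [PartialOrder A] [StarOrderedRing A] [NormedAlgebra ℝ A] [CompleteSpace A]
    (γhat : ℝ → A → A)
    (hlin : ∀ t, IsLinearMap ℝ (γhat t))
    (hmul : ∀ t (a b : A), γhat t (a * b) = γhat t a * γhat t b)
    (hstar : ∀ t (a : A), γhat t (star a) = star (γhat t a))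
    (hgrp : ∀ s t (a : A), γhat (s + t) a = γhat s (γhat t a))
    (hid : ∀ a : A, γhat 0 a = a)
    (hper : ∀ t (a : A), γhat (t + 2 * Real.pi) a = γhat t a)
    (hcont : ∀ a : A, Continuous fun t => γhat t a)
    (ω : A → ℝ≥0∞)
    (hsub : ∀ a b : A, ω (a + b) ≤ ω a + ω b)
    (hhom : ∀ (r : NNReal) (a : A), ω ((r : ℝ) • a) = (r : ℝ≥0∞) * ω a)
    (hinv : ∀ t (a : A), ω (γhat t a) = ω a)
    (hlsc : ∀ (s : ℕ → A) (c : A), Filter.Tendsto s Filter.atTop (nhds c) →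
      ω c ≤ Filter.liminf (fun n => ω (s n)) Filter.atTop)
    (P : A → A)
    (hP : ∀ a : A, P a = (2 * Real.pi)⁻¹ • ∫ t in (0 : ℝ)..(2 * Real.pi), γhat t a)
    (a : A) (ha : 0 ≤ a) :
    ω (P a) ≤ ω a := by
  set T : ℝ := 2 * Real.pi with hTdef
  have hT : 0 < T := by positivity
  set f : ℝ → A := fun t => γhat t a with hfdef
  have hf : Continuous f := hcont a
  set s : ℕ → A := fun n => T⁻¹ • ((T / n) • ∑ k ∈ Finset.range n, f (k * (T / n)))
    with hsdef
  have hstend : Tendsto s atTop (nhds (P a)) := by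
    rw [hP a]
    exact (riemann_aux f hf hT).const_smul (T⁻¹)
  -- ω vanishes at 0
  have hω0 : ω (0 : A) = 0 := by
    have := hhom 0 0
    simpa using this
  -- subadditivity on finite sums
  have hsumω : ∀ n : ℕ, ω (∑ k ∈ Finset.range n, f (k * (T / n))) ≤ n * ω a := by
    intro n
    have : ∀ m : ℕ, ω (∑ k ∈ Finset.range m, f (k * (T / n))) ≤ m * ω a := by
      intro m
      induction m with
      | zero => simp [hω0]
      | succ m ih =>
        rw [Finset.sum_range_succ]
        refine le_trans (hsub _ _) ?_
        have : ω (f (m * (T / n))) = ω a := hinv _ a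
        rw [this]
        push_cast
        calc ω (∑ k ∈ Finset.range m, f (k * (T / n))) + ω a
            ≤ m * ω a + ω a := add_le_add_left ih _
          _ = (m + 1) * ω a := by ring
    exact this n
  -- each Riemann average has weight ≤ ω a
  have hωs : ∀ n : ℕ, 1 ≤ n → ω (s n) ≤ ω a := by
    intro n hn
    have hnR : (0 : ℝ) < n := by exact_mod_cast hn
    have hrepr : s n = (((n : NNReal)⁻¹ : NNReal) : ℝ) • ∑ k ∈ Finset.range n, f (k * (T / n)) := by
      rw [hsdef]
      simp only [smul_smul]
      congr 1
      rw [NNReal.coe_inv, NNReal.coe_natCast]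
      field_simp
    rw [hrepr, hhom]
    have hne : ((n : NNReal)) ≠ 0 := Nat.cast_ne_zero.mpr (by omega)
    rw [ENNReal.coe_inv hne]
    refine le_trans (mul_le_mul_right (by simpa using hsumω n) _) ?_
    rw [← mul_assoc]
    have : ((((n : NNReal)) : ℝ≥0∞))⁻¹ * (n : ℝ≥0∞) = 1 := by
      rw [ENNReal.coe_natCast]
      exact ENNReal.inv_mul_cancel (by exact_mod_cast hne) (ENNReal.natCast_ne_top n)
    rw [this, one_mul]
  refine le_trans (hlsc s (P a) hstend) ?_
  refine Filter.liminf_le_of_frequently_le' ?_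
  refine (Filter.eventually_atTop.mpr ⟨1, fun n hn => hωs n hn⟩).frequently
end
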